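/- Let a, b, c be integers ≥ 2 with 1/a + 1/b + 1/c < 1, let T = T_{a,b,c} be the triangle group with generators x, y, and let ρ : T → GL(V) be a representation of T on a finite-dimensional complex vector space V. Let i denote the dimension of the space V^T of T-invariants of ρ, let i* denote the dimension of the space of invariants of the dual representation of ρ on V*, and for t ∈ T let V^t denote the fixed-point space of ρ(t) in V. Then the first group cohomology satisfies dim H^1(T, ρ) = dim V + i + i* − (dim V^x + dim V^y + dim V^{xy}). -/

import Mathlib

/-- The relations of the (a,b,c) triangle group: `x^a`, `y^b`, `(x*y)^c`
in the free group on two generators. -/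
def triangleRels (a b c : ℕ) : Set (FreeGroup (Fin 2)) :=
  {(FreeGroup.of 0) ^ a, (FreeGroup.of 1) ^ b, (FreeGroup.of 0 * FreeGroup.of 1) ^ c}

/-- The triangle group `T_{a,b,c} = ⟨x, y ∣ x^a = y^b = (xy)^c = 1⟩`. -/
abbrev TriangleGroup (a b c : ℕ) : Type :=
  PresentedGroup (triangleRels a b c)

/-- The generator `x` of the triangle group. -/
def TriangleGroup.x (a b c : ℕ) : TriangleGroup a b c := PresentedGroup.of 0

/-- The generator `y` of the triangle group. -/
def TriangleGroup.y (a b c : ℕ) : TriangleGroup a b c := PresentedGroup.of 1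

namespace WeilAux

open Module LinearMap Submodule Finset

section FinrankComap

variable {k V W : Type} [Field k] [AddCommGroup V] [Module k V]
  [AddCommGroup W] [Module k W]

theorem finrank_comap_subtype [FiniteDimensional k V] (P Q : Submodule k V) :
    finrank k (Q.comap P.subtype) = finrank k (P ⊓ Q : Submodule k V) := by
  have h : Q.comap P.subtype = (P ⊓ Q).comap P.subtype := by
    ext ⟨v, hv⟩
    simp [Submodule.mem_comap, hv]
  rw [h, (Submodule.comapSubtypeEquivOfLe (inf_le_left : P ⊓ Q ≤ P)).finrank_eq]

theorem finrank_comap_eq [FiniteDimensional k V] (f : V →ₗ[k] W) (D : Submodule k W) :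
    finrank k (D.comap f) =
      finrank k (LinearMap.ker f) + finrank k (D ⊓ LinearMap.range f : Submodule k W) := by
  have hle : LinearMap.ker f ≤ D.comap f := fun v hv => by
    have hv' : f v = 0 := hv
    simp [Submodule.mem_comap, hv']
  have e1 : LinearMap.range (f.domRestrict (D.comap f)) = LinearMap.range f ⊓ D := by
    rw [LinearMap.range_domRestrict, Submodule.map_comap_eq]
  have e2 : LinearMap.ker (f.domRestrict (D.comap f)) =
      (LinearMap.ker f).comap (D.comap f).subtype := rfl
  have h := LinearMap.finrank_range_add_finrank_ker (f.domRestrict (D.comap f))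
  rw [e1, e2, finrank_comap_subtype, inf_eq_right.mpr hle, inf_comm] at h
  omega

theorem finrank_inf_comap [FiniteDimensional k V] (f : V →ₗ[k] W) (P : Submodule k V)
    (D : Submodule k W) :
    finrank k (P ⊓ D.comap f : Submodule k V) =
      finrank k (P ⊓ LinearMap.ker f : Submodule k V) +
        finrank k (D ⊓ P.map f : Submodule k W) := by
  have e0 : D.comap (f.domRestrict P) = (D.comap f).comap P.subtype := rfl
  have h := finrank_comap_eq (f.domRestrict P) D
  rw [e0, finrank_comap_subtype, LinearMap.range_domRestrict] at h
  have e2 : LinearMap.ker (f.domRestrict P) = (LinearMap.ker f).comap P.subtype := rfl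
  rw [e2, finrank_comap_subtype] at h
  exact h

end FinrankComap

section Norm

variable {k V : Type} [Field k] [AddCommGroup V] [Module k V] [FiniteDimensional k V]

theorem ker_norm_eq_range (φ : V →ₗ[k] V) (m : ℕ) (hm : (m : k) ≠ 0) (hφ : φ ^ m = 1) :
    LinearMap.ker (∑ j ∈ Finset.range m, φ ^ j) = LinearMap.range (φ - 1) ∧
    LinearMap.range (∑ j ∈ Finset.range m, φ ^ j) = LinearMap.ker (φ - 1) := by
  set N := ∑ j ∈ Finset.range m, φ ^ j with hN
  have hNφ : N * (φ - 1) = 0 := by rw [hN, geom_sum_mul, hφ, sub_self]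
  have hφN : (φ - 1) * N = 0 := by rw [hN, mul_geom_sum, hφ, sub_self]
  have h1 : LinearMap.range (φ - 1) ≤ LinearMap.ker N := by
    rintro _ ⟨v, rfl⟩
    have := congrArg (fun f : V →ₗ[k] V => f v) hNφ
    simpa [Module.End.mul_apply] using this
  have h3 : LinearMap.range N ≤ LinearMap.ker (φ - 1) := by
    rintro _ ⟨v, rfl⟩
    have := congrArg (fun f : V →ₗ[k] V => f v) hφN
    simpa [Module.End.mul_apply] using this
  have h2 : LinearMap.ker (φ - 1) ≤ LinearMap.range N := by
    intro v hv
    have hφv : φ v = v := by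
      have := (LinearMap.mem_ker.mp hv)
      rw [LinearMap.sub_apply, Module.End.one_apply, sub_eq_zero] at this
      exact this
    have hpow : ∀ j : ℕ, (φ ^ j) v = v := by
      intro j
      induction j with
      | zero => simp
      | succ j ih => rw [pow_succ, Module.End.mul_apply, hφv, ih]
    have hNv : N v = (m : k) • v := by
      rw [hN, LinearMap.sum_apply]
      simp only [hpow]
      simp [Finset.sum_const, Finset.card_range, Nat.cast_smul_eq_nsmul]
    exact ⟨(m : k)⁻¹ • v, by rw [map_smul, hNv, smul_smul, inv_mul_cancel₀ hm, one_smul]⟩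
  have r1 := LinearMap.finrank_range_add_finrank_ker N
  have r2 := LinearMap.finrank_range_add_finrank_ker (φ - 1)
  have m2 : finrank k (LinearMap.ker (φ - 1)) ≤ finrank k (LinearMap.range N) :=
    Submodule.finrank_mono h2
  constructor
  · exact (Submodule.eq_of_le_of_finrank_le h1 (by omega)).symm
  · exact Submodule.eq_of_le_of_finrank_le h3 (by omega)

end Norm

section SDP

variable {k V G : Type} [CommRing k] [AddCommGroup V] [Module k V] [Group G]

@[ext] structure SDP (ρ : Representation k G V) : Type where
  v : V
  g : G

variable {ρ : Representation k G V}

instance : One (SDP ρ) := ⟨⟨0, 1⟩⟩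
instance : Mul (SDP ρ) := ⟨fun p q => ⟨p.v + ρ p.g q.v, p.g * q.g⟩⟩
instance : Inv (SDP ρ) := ⟨fun p => ⟨-(ρ p.g⁻¹ p.v), p.g⁻¹⟩⟩

@[simp] lemma SDP.mul_v (p q : SDP ρ) : (p * q).v = p.v + ρ p.g q.v := rfl
@[simp] lemma SDP.mul_g (p q : SDP ρ) : (p * q).g = p.g * q.g := rfl
@[simp] lemma SDP.one_v : (1 : SDP ρ).v = 0 := rfl
@[simp] lemma SDP.one_g : (1 : SDP ρ).g = 1 := rfl
@[simp] lemma SDP.inv_v (p : SDP ρ) : (p⁻¹ : SDP ρ).v = -(ρ p.g⁻¹ p.v) := rfl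
@[simp] lemma SDP.inv_g (p : SDP ρ) : (p⁻¹ : SDP ρ).g = p.g⁻¹ := rfl

instance : Group (SDP ρ) where
  mul_assoc p q r := by
    ext
    · simp [map_mul, Module.End.mul_apply, add_assoc]
    · simp [mul_assoc]
  one_mul p := by ext <;> simp
  mul_one p := by ext <;> simp
  inv_mul_cancel p := by ext <;> simp

lemma SDP.pow_eq (p : SDP ρ) (m : ℕ) :
    p ^ m = ⟨(∑ j ∈ Finset.range m, (ρ p.g) ^ j) p.v, p.g ^ m⟩ := by
  induction m with
  | zero => ext <;> simp
  | succ m ih =>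
    rw [pow_succ, ih]
    ext
    · simp [Finset.sum_range_succ, map_pow, LinearMap.add_apply]
    · simp [pow_succ]

/-- Second projection as a group hom. -/
def SDP.sndHom : SDP ρ →* G := ⟨⟨SDP.g, rfl⟩, fun _ _ => rfl⟩

end SDP

section Rels

variable (a b c : ℕ)

theorem TriangleGroup.x_pow : (TriangleGroup.x a b c) ^ a = 1 := by
  show (PresentedGroup.mk (triangleRels a b c) (FreeGroup.of 0)) ^ a = 1
  rw [← map_pow]
  exact (QuotientGroup.eq_one_iff _).mpr
    (Subgroup.subset_normalClosure (Set.mem_insert _ _))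

theorem TriangleGroup.y_pow : (TriangleGroup.y a b c) ^ b = 1 := by
  show (PresentedGroup.mk (triangleRels a b c) (FreeGroup.of 1)) ^ b = 1
  rw [← map_pow]
  refine (QuotientGroup.eq_one_iff _).mpr (Subgroup.subset_normalClosure ?_)
  right; left; rfl

theorem TriangleGroup.xy_pow : (TriangleGroup.x a b c * TriangleGroup.y a b c) ^ c = 1 := by
  show (PresentedGroup.mk (triangleRels a b c) (FreeGroup.of 0) *
    PresentedGroup.mk (triangleRels a b c) (FreeGroup.of 1)) ^ c = 1
  rw [← map_mul, ← map_pow]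
  refine (QuotientGroup.eq_one_iff _).mpr (Subgroup.subset_normalClosure ?_)
  right; right; rfl

theorem TriangleGroup.closure_xy :
    Subgroup.closure ({TriangleGroup.x a b c, TriangleGroup.y a b c} :
      Set (TriangleGroup a b c)) = ⊤ := by
  have h : ({TriangleGroup.x a b c, TriangleGroup.y a b c} : Set (TriangleGroup a b c)) =
      Set.range (PresentedGroup.of : Fin 2 → TriangleGroup a b c) := by
    ext g
    simp only [Set.mem_insert_iff, Set.mem_singleton_iff, Set.mem_range, Fin.exists_fin_two]
    constructor
    · rintro (rfl | rfl)
      exacts [Or.inl rfl, Or.inr rfl]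
    · rintro (rfl | rfl)
      exacts [Or.inl rfl, Or.inr rfl]
  rw [h, PresentedGroup.closure_range_of]

end Rels

section Cocycles

variable {k V : Type} [CommRing k] [AddCommGroup V] [Module k V]

theorem cocycle_map_one {G : Type} [Group G] (ρ : Representation k G V) (f : G → V)
    (hf : ∀ g h, f (g * h) = ρ g (f h) + f g) : f 1 = 0 := by
  have := hf 1 1
  rw [mul_one, map_one, Module.End.one_apply] at this
  exact (left_eq_add.mp this)

theorem cocycle_inv {G : Type} [Group G] (ρ : Representation k G V) (f : G → V)
    (hf : ∀ g h, f (g * h) = ρ g (f h) + f g) (g : G) :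
    f g⁻¹ = -(ρ g⁻¹ (f g)) := by
  have h0 : f (g * g⁻¹) = 0 := by rw [mul_inv_cancel]; exact cocycle_map_one ρ f hf
  rw [hf g g⁻¹] at h0
  have h1 := congrArg (fun v => ρ g⁻¹ v) h0
  simp only [map_add, map_zero] at h1
  have h2 : ρ g⁻¹ (ρ g (f g⁻¹)) = f g⁻¹ := by
    rw [← Module.End.mul_apply, ← map_mul, inv_mul_cancel, map_one, Module.End.one_apply]
  rw [h2] at h1
  exact eq_neg_of_add_eq_zero_left h1

theorem cocycle_pow {G : Type} [Group G] (ρ : Representation k G V) (f : G → V)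
    (hf : ∀ g h, f (g * h) = ρ g (f h) + f g) (g : G) (m : ℕ) :
    f (g ^ m) = (∑ j ∈ Finset.range m, (ρ g) ^ j) (f g) := by
  induction m with
  | zero => simp [cocycle_map_one ρ f hf]
  | succ m ih =>
    rw [pow_succ', hf, ih, Finset.sum_range_succ', LinearMap.add_apply, pow_zero,
      Module.End.one_apply]
    congr 1
    rw [LinearMap.sum_apply, map_sum, LinearMap.sum_apply]
    refine Finset.sum_congr rfl fun j _ => ?_
    rw [pow_succ', Module.End.mul_apply]

theorem tri_exists_cocycle (a b c : ℕ) (ρ : Representation k (TriangleGroup a b c) V)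
    (v w : V)
    (hv : (∑ j ∈ Finset.range a, (ρ (TriangleGroup.x a b c)) ^ j) v = 0)
    (hw : (∑ j ∈ Finset.range b, (ρ (TriangleGroup.y a b c)) ^ j) w = 0)
    (hvw : (∑ j ∈ Finset.range c, (ρ (TriangleGroup.x a b c * TriangleGroup.y a b c)) ^ j)
      (v + ρ (TriangleGroup.x a b c) w) = 0) :
    ∃ f : TriangleGroup a b c → V, (∀ g h, f (g * h) = ρ g (f h) + f g) ∧
      f (TriangleGroup.x a b c) = v ∧ f (TriangleGroup.y a b c) = w := by
  set x₀ := TriangleGroup.x a b c with hx₀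
  set y₀ := TriangleGroup.y a b c with hy₀
  let F : Fin 2 → SDP ρ := ![⟨v, x₀⟩, ⟨w, y₀⟩]
  have hrel : ∀ r ∈ triangleRels a b c, FreeGroup.lift F r = 1 := by
    intro r hr
    rcases hr with rfl | rfl | rfl
    · rw [map_pow, FreeGroup.lift_apply_of]
      show (⟨v, x₀⟩ : SDP ρ) ^ a = 1
      rw [SDP.pow_eq]
      ext
      · simpa using hv
      · simpa using TriangleGroup.x_pow a b c
    · rw [map_pow, FreeGroup.lift_apply_of]
      show (⟨w, y₀⟩ : SDP ρ) ^ b = 1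
      rw [SDP.pow_eq]
      ext
      · simpa using hw
      · simpa using TriangleGroup.y_pow a b c
    · rw [map_pow, map_mul, FreeGroup.lift_apply_of, FreeGroup.lift_apply_of]
      show ((⟨v, x₀⟩ : SDP ρ) * ⟨w, y₀⟩) ^ c = 1
      have hmul : ((⟨v, x₀⟩ : SDP ρ) * ⟨w, y₀⟩) = ⟨v + ρ x₀ w, x₀ * y₀⟩ := rfl
      rw [hmul, SDP.pow_eq]
      ext
      · simpa using hvw
      · simpa using TriangleGroup.xy_pow a b c
  let π := PresentedGroup.toGroup hrel
  have hsnd : ∀ g, (π g).g = g := by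
    have heq : (SDP.sndHom.comp π) = MonoidHom.id _ := by
      refine PresentedGroup.ext fun i => ?_
      fin_cases i
      · show SDP.sndHom (π (PresentedGroup.of 0)) = PresentedGroup.of 0
        rw [show π (PresentedGroup.of 0) = F 0 from PresentedGroup.toGroup.of hrel]
        rfl
      · show SDP.sndHom (π (PresentedGroup.of 1)) = PresentedGroup.of 1
        rw [show π (PresentedGroup.of 1) = F 1 from PresentedGroup.toGroup.of hrel]
        rfl
    intro g
    exact DFunLike.congr_fun heq g
  refine ⟨fun g => (π g).v, fun g h => ?_, ?_, ?_⟩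
  · show (π (g * h)).v = ρ g ((π h).v) + (π g).v
    rw [map_mul, SDP.mul_v, hsnd, add_comm]
  · show (π (PresentedGroup.of 0)).v = v
    rw [show π (PresentedGroup.of 0) = F 0 from PresentedGroup.toGroup.of hrel]
    rfl
  · show (π (PresentedGroup.of 1)).v = w
    rw [show π (PresentedGroup.of 1) = F 1 from PresentedGroup.toGroup.of hrel]
    rfl

end Cocycles

end WeilAux

open Module groupCohomology in
/-- Weil's formula for the dimension of the first group cohomology of a representation of a
hyperbolic triangle group on a finite-dimensional complex vector space. -/
theorem dim_H1_triangleGroup (a b c : ℕ) (ha : 2 ≤ a) (hb : 2 ≤ b) (hc : 2 ≤ c)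
    (hhyp : (1 : ℚ) / a + 1 / b + 1 / c < 1)
    (V : Type) [AddCommGroup V] [Module ℂ V] [FiniteDimensional ℂ V]
    (ρ : Representation ℂ (TriangleGroup a b c) V) :
    (finrank ℂ (H1 (Rep.of ρ)) : ℤ) =
      finrank ℂ V + finrank ℂ ρ.invariants + finrank ℂ ρ.dual.invariants -
        (finrank ℂ (LinearMap.ker (ρ (TriangleGroup.x a b c) - 1)) +
         finrank ℂ (LinearMap.ker (ρ (TriangleGroup.y a b c) - 1)) +
         finrank ℂ (LinearMap.ker (ρ (TriangleGroup.x a b c * TriangleGroup.y a b c) - 1))) := by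
  classical
  set T := TriangleGroup a b c
  set x₀ := TriangleGroup.x a b c with hx₀def
  set y₀ := TriangleGroup.y a b c with hy₀def
  set z₀ := x₀ * y₀ with hz₀def
  set n := finrank ℂ V with hn
  -- group relations
  have hxa : x₀ ^ a = 1 := WeilAux.TriangleGroup.x_pow a b c
  have hyb : y₀ ^ b = 1 := WeilAux.TriangleGroup.y_pow a b c
  have hzc : z₀ ^ c = 1 := WeilAux.TriangleGroup.xy_pow a b c
  have hrx : (ρ x₀) ^ a = 1 := by rw [← map_pow, hxa, map_one]
  have hry : (ρ y₀) ^ b = 1 := by rw [← map_pow, hyb, map_one]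
  have hrz : (ρ z₀) ^ c = 1 := by rw [← map_pow, hzc, map_one]
  have ha0 : (a : ℂ) ≠ 0 := Nat.cast_ne_zero.mpr (by omega)
  have hb0 : (b : ℂ) ≠ 0 := Nat.cast_ne_zero.mpr (by omega)
  have hc0 : (c : ℂ) ≠ 0 := Nat.cast_ne_zero.mpr (by omega)
  -- norms
  set Nx := ∑ j ∈ Finset.range a, (ρ x₀) ^ j with hNx
  set Ny := ∑ j ∈ Finset.range b, (ρ y₀) ^ j with hNy
  set Nz := ∑ j ∈ Finset.range c, (ρ z₀) ^ j with hNz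
  obtain ⟨hkerNx, hrangeNx⟩ := WeilAux.ker_norm_eq_range (ρ x₀) a ha0 hrx
  obtain ⟨hkerNy, hrangeNy⟩ := WeilAux.ker_norm_eq_range (ρ y₀) b hb0 hry
  obtain ⟨hkerNz, hrangeNz⟩ := WeilAux.ker_norm_eq_range (ρ z₀) c hc0 hrz
  rw [← hNx] at hkerNx hrangeNx
  rw [← hNy] at hkerNy hrangeNy
  rw [← hNz] at hkerNz hrangeNz
  -- rank/nullity for the norms
  have eqx : finrank ℂ (LinearMap.ker Nx) + finrank ℂ (LinearMap.ker (ρ x₀ - 1)) = n := by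
    have h := LinearMap.finrank_range_add_finrank_ker Nx
    rw [hrangeNx] at h
    omega
  have eqy : finrank ℂ (LinearMap.ker Ny) + finrank ℂ (LinearMap.ker (ρ y₀ - 1)) = n := by
    have h := LinearMap.finrank_range_add_finrank_ker Ny
    rw [hrangeNy] at h
    omega
  have eqz : finrank ℂ (LinearMap.ker Nz) + finrank ℂ (LinearMap.ker (ρ z₀ - 1)) = n := by
    have h := LinearMap.finrank_range_add_finrank_ker Nz
    rw [hrangeNz] at h
    omega
  -- the model space of cocycles
  set s : V × V →ₗ[ℂ] V := (LinearMap.id : V →ₗ[ℂ] V).coprod (ρ x₀) with hsdef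
  have hs : ∀ p : V × V, s p = p.1 + ρ x₀ p.2 := fun p => by
    simp [hsdef]
  set Z : Submodule ℂ (V × V) :=
    ((LinearMap.ker Nx).prod (LinearMap.ker Ny)) ⊓ (LinearMap.ker Nz).comap s with hZdef
  set Rx := LinearMap.range (ρ x₀ - 1) with hRx
  set Ry := LinearMap.range (ρ y₀ - 1) with hRy
  set Rz := LinearMap.range (ρ z₀ - 1) with hRz
  set U : Submodule ℂ V := Rx ⊔ Ry.map (ρ x₀) with hU
  -- ρ x₀ as an equivalence
  have hxinv : ∀ v : V, ρ x₀ (ρ x₀⁻¹ v) = v := fun v => by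
    rw [← Module.End.mul_apply, ← map_mul, mul_inv_cancel, map_one, Module.End.one_apply]
  have hxinv' : ∀ v : V, ρ x₀⁻¹ (ρ x₀ v) = v := fun v => by
    rw [← Module.End.mul_apply, ← map_mul, inv_mul_cancel, map_one, Module.End.one_apply]
  set ex : V ≃ₗ[ℂ] V := LinearEquiv.ofLinear (ρ x₀) (ρ x₀⁻¹)
    (by ext v; simp [hxinv]) (by ext v; simp [hxinv']) with hex
  have hexcoe : (ex : V →ₗ[ℂ] V) = ρ x₀ := rfl
  -- image of s
  have hmap : (Rx.prod Ry).map s = U := by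
    apply le_antisymm
    · rintro _ ⟨⟨v, w⟩, ⟨hv, hw⟩, rfl⟩
      rw [hs]
      exact add_mem (Submodule.mem_sup_left hv)
        (Submodule.mem_sup_right (Submodule.mem_map_of_mem hw))
    · apply sup_le
      · intro v hv
        exact ⟨(v, 0), ⟨hv, Submodule.zero_mem _⟩, by rw [hs]; simp⟩
      · rintro _ ⟨w, hw, rfl⟩
        exact ⟨(0, w), ⟨Submodule.zero_mem _, hw⟩, by rw [hs]; simp⟩
  -- Rz is contained in U
  have hRzle : Rz ≤ U := by
    rintro _ ⟨w, rfl⟩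
    have hzw : (ρ z₀ - 1) w = ρ x₀ ((ρ y₀ - 1) w) + (ρ x₀ - 1) w := by
      simp only [LinearMap.sub_apply, Module.End.one_apply, map_sub, hz₀def, map_mul,
        Module.End.mul_apply]
      abel
    rw [hzw]
    exact add_mem (Submodule.mem_sup_right (Submodule.mem_map_of_mem ⟨w, rfl⟩))
      (Submodule.mem_sup_left ⟨w, rfl⟩)
  -- dual annihilator of U is the invariants of the dual representation
  have hdual : ∀ (g : T) (F : Module.Dual ℂ V), ρ.dual g F = F ∘ₗ ρ g⁻¹ := fun g F => rfl
  have htop : ∀ g : T, g ∈ Subgroup.closure ({x₀, y₀} : Set T) := by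
    intro g
    have h := WeilAux.TriangleGroup.closure_xy a b c
    rw [hx₀def, hy₀def, h]
    exact Subgroup.mem_top g
  have hUann : U.dualAnnihilator = ρ.dual.invariants := by
    ext F
    rw [Submodule.mem_dualAnnihilator, Representation.mem_invariants]
    constructor
    · intro hF
      have hx' : ∀ v, F (ρ x₀ v) = F v := by
        intro v
        have h0 := hF _ (Submodule.mem_sup_left (⟨v, rfl⟩ : (ρ x₀ - 1) v ∈ Rx))
        rw [LinearMap.sub_apply, Module.End.one_apply, map_sub, sub_eq_zero] at h0
        exact h0
      have hy' : ∀ v, F (ρ y₀ v) = F v := by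
        intro v
        have h0 := hF _ (Submodule.mem_sup_right
          (Submodule.mem_map_of_mem (⟨v, rfl⟩ : (ρ y₀ - 1) v ∈ Ry)))
        rw [LinearMap.sub_apply, Module.End.one_apply, map_sub, map_sub, sub_eq_zero] at h0
        rw [← hx' (ρ y₀ v), h0, hx']
      have hall : ∀ g : T, ∀ v, F (ρ g v) = F v := by
        intro g
        refine Subgroup.closure_induction (p := fun g _ => ∀ v, F (ρ g v) = F v)
          ?_ ?_ ?_ ?_ (htop g)
        · rintro g (rfl | rfl)
          exacts [hx', hy']
        · intro v; rw [map_one, Module.End.one_apply]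
        · intro g h _ _ hg hh v
          rw [map_mul, Module.End.mul_apply, hg, hh]
        · intro g _ hg v
          rw [← hg (ρ g⁻¹ v), ← Module.End.mul_apply, ← map_mul, mul_inv_cancel, map_one,
            Module.End.one_apply]
      intro g
      rw [hdual]
      ext v
      exact hall g⁻¹ v
    · intro hF
      have hF' : ∀ (g : T) (v : V), F (ρ g v) = F v := by
        intro g v
        have h := hF g⁻¹
        rw [hdual, inv_inv] at h
        conv_rhs => rw [← h]
        rfl
      intro v hv
      have hsub : U ≤ LinearMap.ker F := by
        apply sup_le
        · rintro _ ⟨w, rfl⟩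
          simp only [LinearMap.mem_ker, LinearMap.sub_apply, Module.End.one_apply, map_sub,
            hF', sub_self]
        · rintro _ ⟨_, ⟨w, rfl⟩, rfl⟩
          simp only [LinearMap.mem_ker, LinearMap.sub_apply, Module.End.one_apply, map_sub,
            hF', sub_self]
      exact hsub hv
  -- dimension of U
  have hUfin : finrank ℂ U + finrank ℂ ρ.dual.invariants = n := by
    have h1 := Submodule.finrank_quotient_add_finrank U
    have h2 := (Subspace.quotEquivAnnihilator U).finrank_eq
    rw [hUann] at h2
    omega
  -- dimension of Z
  have hZrank := WeilAux.finrank_inf_comap s (Rx.prod Ry) Rz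
  rw [hmap, inf_eq_left.mpr hRzle] at hZrank
  -- the kernel part
  set Cx : Submodule ℂ V := Rx.comap (ρ x₀) with hCx
  have eJ : ↥(Rx.prod Ry ⊓ LinearMap.ker s) ≃ₗ[ℂ] ↥(Ry ⊓ Cx : Submodule ℂ V) := by
    refine
      { toFun := fun q => ⟨(q : V × V).2, ?_⟩
        map_add' := fun q₁ q₂ => rfl
        map_smul' := fun r q => rfl
        invFun := fun w => ⟨(-(ρ x₀ (w : V)), (w : V)), ?_⟩
        left_inv := ?_
        right_inv := ?_ }
    · obtain ⟨hmem, hker⟩ := Submodule.mem_inf.mp q.2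
      obtain ⟨h1, h2⟩ := Submodule.mem_prod.mp hmem
      have hk : (q : V × V).1 + ρ x₀ (q : V × V).2 = 0 := by
        rw [← hs]; exact hker
      refine Submodule.mem_inf.mpr ⟨h2, ?_⟩
      rw [Submodule.mem_comap]
      have hneg : ρ x₀ (q : V × V).2 = -(q : V × V).1 := eq_neg_of_add_eq_zero_right hk
      rw [hneg]
      exact neg_mem h1
    · obtain ⟨hw1, hw2⟩ := Submodule.mem_inf.mp w.2
      refine Submodule.mem_inf.mpr ⟨Submodule.mem_prod.mpr ⟨neg_mem hw2, hw1⟩, ?_⟩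
      rw [LinearMap.mem_ker, hs]
      simp
    · intro q
      apply Subtype.ext
      obtain ⟨hmem, hker⟩ := Submodule.mem_inf.mp q.2
      have hk : (q : V × V).1 + ρ x₀ (q : V × V).2 = 0 := by
        rw [← hs]; exact hker
      have hneg : -(ρ x₀ (q : V × V).2) = (q : V × V).1 := neg_eq_of_add_eq_zero_left hk
      exact Prod.ext hneg rfl
    · intro w
      apply Subtype.ext
      rfl
  have hCxfin : finrank ℂ Cx = finrank ℂ Rx := by
    have h : Cx = Rx.map (ex.symm : V →ₗ[ℂ] V) := by
      rw [hCx, ← hexcoe]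
      exact Submodule.comap_equiv_eq_map_symm ex Rx
    rw [h]
    exact LinearEquiv.finrank_map_eq ex.symm Rx
  have hsupfin : finrank ℂ (Ry ⊔ Cx : Submodule ℂ V) = finrank ℂ U := by
    have hr : LinearMap.range (ρ x₀) = ⊤ :=
      LinearMap.range_eq_top.mpr (fun v => ⟨ρ x₀⁻¹ v, hxinv v⟩)
    have h1 : Cx.map (ρ x₀) = Rx := by
      rw [hCx, Submodule.map_comap_eq, hr, top_inf_eq]
    have h : (Ry ⊔ Cx : Submodule ℂ V).map (ex : V →ₗ[ℂ] V) = U := by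
      rw [Submodule.map_sup, hexcoe, h1, hU]
      exact sup_comm _ _
    rw [← h]
    exact (LinearEquiv.finrank_map_eq ex _).symm
  have hsupinf := Submodule.finrank_sup_add_finrank_inf_eq Ry Cx
  -- cocycle space is isomorphic to Z
  set A := Rep.of ρ with hA
  haveI : FiniteDimensional ℂ A := ‹FiniteDimensional ℂ V›
  set E : cocycles₁ A →ₗ[ℂ] V × V :=
    { toFun := fun f => (f x₀, f y₀)
      map_add' := fun f g => rfl
      map_smul' := fun r f => rfl } with hE
  have hmemZ : ∀ f : cocycles₁ A, E f ∈ Z := by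
    intro f
    let fc : T → V := ⇑f
    have hfc : ∀ g h, fc (g * h) = ρ g (fc h) + fc g :=
      (mem_cocycles₁_iff (A := A) ⇑f).mp f.2
    have h1 : Nx (fc x₀) = 0 := by
      rw [hNx, ← WeilAux.cocycle_pow ρ fc hfc x₀ a, hxa]
      exact WeilAux.cocycle_map_one ρ fc hfc
    have h2 : Ny (fc y₀) = 0 := by
      rw [hNy, ← WeilAux.cocycle_pow ρ fc hfc y₀ b, hyb]
      exact WeilAux.cocycle_map_one ρ fc hfc
    have h3 : Nz (fc x₀ + ρ x₀ (fc y₀)) = 0 := by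
      have hxy : fc x₀ + ρ x₀ (fc y₀) = fc z₀ := by
        rw [hz₀def, hfc x₀ y₀, add_comm]
      rw [hxy, hNz, ← WeilAux.cocycle_pow ρ fc hfc z₀ c, hzc]
      exact WeilAux.cocycle_map_one ρ fc hfc
    refine Submodule.mem_inf.mpr ⟨Submodule.mem_prod.mpr ⟨h1, h2⟩, ?_⟩
    rw [Submodule.mem_comap, hs]
    exact h3
  have hinj : Function.Injective E := by
    intro f₁ f₂ h
    let fc₁ : T → V := ⇑f₁
    let fc₂ : T → V := ⇑f₂
    have hfc₁ : ∀ g h, fc₁ (g * h) = ρ g (fc₁ h) + fc₁ g :=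
      (mem_cocycles₁_iff (A := A) ⇑f₁).mp f₁.2
    have hfc₂ : ∀ g h, fc₂ (g * h) = ρ g (fc₂ h) + fc₂ g :=
      (mem_cocycles₁_iff (A := A) ⇑f₂).mp f₂.2
    have hx1 : fc₁ x₀ = fc₂ x₀ := congrArg Prod.fst h
    have hy1 : fc₁ y₀ = fc₂ y₀ := congrArg Prod.snd h
    have hall : ∀ g : T, fc₁ g = fc₂ g := by
      intro g
      refine Subgroup.closure_induction (p := fun g _ => fc₁ g = fc₂ g)
        ?_ ?_ ?_ ?_ (htop g)
      · rintro g (rfl | rfl)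
        exacts [hx1, hy1]
      · show fc₁ (1 : T) = fc₂ (1 : T)
        rw [WeilAux.cocycle_map_one ρ fc₁ hfc₁, WeilAux.cocycle_map_one ρ fc₂ hfc₂]
      · intro g h _ _ hg hh
        show fc₁ (g * h) = fc₂ (g * h)
        rw [hfc₁ g h, hfc₂ g h, hg, hh]
      · intro g _ hg
        show fc₁ g⁻¹ = fc₂ g⁻¹
        rw [WeilAux.cocycle_inv ρ fc₁ hfc₁ g, WeilAux.cocycle_inv ρ fc₂ hfc₂ g, hg]
    exact Subtype.ext (funext hall)
  have hsurj : ∀ p : V × V, p ∈ Z → ∃ f : cocycles₁ A, E f = p := by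
    rintro ⟨v, w⟩ hp
    obtain ⟨hmem, hker⟩ := Submodule.mem_inf.mp hp
    obtain ⟨h1, h2⟩ := Submodule.mem_prod.mp hmem
    have h1' : Nx v = 0 := h1
    have h2' : Ny w = 0 := h2
    have h3' : Nz (v + ρ x₀ w) = 0 := by
      have h := Submodule.mem_comap.mp hker
      rw [hs] at h
      exact h
    rw [hNx] at h1'
    rw [hNy] at h2'
    rw [hNz] at h3'
    obtain ⟨f, hf, hfx, hfy⟩ := WeilAux.tri_exists_cocycle a b c ρ v w h1' h2' h3'
    exact ⟨⟨f, (mem_cocycles₁_iff (A := A) f).mpr hf⟩, Prod.ext hfx hfy⟩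
  have eZ1 : cocycles₁ A ≃ₗ[ℂ] ↥Z := by
    refine LinearEquiv.ofBijective (E.codRestrict Z hmemZ) ⟨?_, ?_⟩
    · intro f₁ f₂ h
      exact hinj (congrArg Subtype.val h)
    · rintro ⟨p, hp⟩
      obtain ⟨f, hf⟩ := hsurj p hp
      exact ⟨f, Subtype.ext hf⟩
  haveI : FiniteDimensional ℂ (cocycles₁ A) := LinearEquiv.finiteDimensional eZ1.symm
  have hZ1fin : finrank ℂ (cocycles₁ A) = finrank ℂ Z := eZ1.finrank_eq
  -- coboundaries
  have hB1 : finrank ℂ (LinearMap.range (shortComplexH1 A).moduleCatToCycles) +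
      finrank ℂ ρ.invariants = n := by
    let M : V →ₗ[ℂ] LinearMap.ker (shortComplexH1 A).g.hom := (shortComplexH1 A).moduleCatToCycles
    have hk : LinearMap.ker M = ρ.invariants :=
      (LinearMap.ker_codRestrict _ _ _).trans (d₀₁_ker_eq_invariants A)
    have h := LinearMap.finrank_range_add_finrank_ker M
    rw [hk] at h
    exact h
  have hH1 : finrank ℂ (H1 A) + finrank ℂ (LinearMap.range (shortComplexH1 A).moduleCatToCycles) =
      finrank ℂ (cocycles₁ A) := by
    haveI : FiniteDimensional ℂ (LinearMap.ker (shortComplexH1 A).g.hom) :=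
      ‹FiniteDimensional ℂ (cocycles₁ A)›
    rw [(H1Iso A).toLinearEquiv.finrank_eq]
    exact Submodule.finrank_quotient_add_finrank _
  -- put the numbers together
  have hfinal : finrank ℂ Z + finrank ℂ U =
      finrank ℂ (LinearMap.ker Nx) + finrank ℂ (LinearMap.ker Ny) +
        finrank ℂ (LinearMap.ker Nz) := by
    have hZeq : finrank ℂ Z = finrank ℂ (Rx.prod Ry ⊓ LinearMap.ker s : Submodule ℂ (V × V)) +
        finrank ℂ Rz := by
      rw [hZdef, hkerNx, hkerNy, hkerNz]
      exact hZrank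
    have hJ : finrank ℂ (Rx.prod Ry ⊓ LinearMap.ker s : Submodule ℂ (V × V)) =
        finrank ℂ (Ry ⊓ Cx : Submodule ℂ V) := eJ.finrank_eq
    have hkx : finrank ℂ Rx = finrank ℂ (LinearMap.ker Nx) := by rw [hkerNx]
    have hky : finrank ℂ Ry = finrank ℂ (LinearMap.ker Ny) := by rw [hkerNy]
    have hkz : finrank ℂ Rz = finrank ℂ (LinearMap.ker Nz) := by rw [hkerNz]
    rw [hZeq, hJ]
    rw [hsupfin] at hsupinf
    omega
  rw [hZ1fin] at hH1
  omega
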